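/- arXiv:1510.02628 — 3 statements merged into one kernel-verified Lean document; each statement's English description precedes it below -/
import Mathlib

section
/- For each n ≥ 3, let G′_n be the group presented by generators s_{ij} for 1 ≤ i < j ≤ n together with s_{i1} for 2 ≤ i ≤ n, subject to the relations s_{i1}s_{j1}⁻¹s_{jk}s_{1k}⁻¹s_{1j}s_{ij}⁻¹s_{ik} = s_{ik}s_{1k}⁻¹s_{1j}s_{ij}⁻¹s_{i1}s_{j1}⁻¹s_{jk} for all 2 ≤ i < j < k ≤ n. Then the assignments s_{ij} ↦ t_{ij} (for 1 ≤ i < j ≤ n) and s_{i1} ↦ t_{i1} (for 2 ≤ i ≤ n) define a group isomorphism from G′_n onto the big triangle group 𝕋_n. -/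
open scoped Classical

noncomputable section

namespace NCPolygon

/-- Cyclic successor on `Fin n` (the vertices of the `n`-gon in cyclic order). -/
def csucc {n : ℕ} (i : Fin n) : Fin n :=
  ⟨(i.1 + 1) % n, Nat.mod_lt _ (Nat.lt_of_le_of_lt (Nat.zero_le _) i.isLt)⟩

/-- Cyclic predecessor on `Fin n`. -/
def cpred {n : ℕ} (i : Fin n) : Fin n :=
  ⟨(i.1 + (n - 1)) % n, Nat.mod_lt _ (Nat.lt_of_le_of_lt (Nat.zero_le _) i.isLt)⟩

/-- A list of elements of `Fin n` is *cyclic* if its entries are distinct and some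
cyclic rotation of it is strictly increasing. -/
def IsCyclicSeq {n : ℕ} (l : List (Fin n)) : Prop :=
  l.Nodup ∧ ∃ k : ℕ, (l.rotate k).Pairwise (· < ·)

/-- The pair `(i,k)` crosses `(j,l)` iff `(i,j,k,l)` is cyclic. -/
def Crosses {n : ℕ} (p q : Fin n × Fin n) : Prop :=
  IsCyclicSeq [p.1, q.1, p.2, q.2]

def NonCrossing {n : ℕ} (Δ : Set (Fin n × Fin n)) : Prop :=
  (∀ p ∈ Δ, p.1 ≠ p.2) ∧ ∀ p ∈ Δ, ∀ q ∈ Δ, ¬ Crosses p q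

/-- A triangulation of the `n`-gon: a maximal crossing-free set of (directed) chords. -/
def IsTriangulation {n : ℕ} (Δ : Set (Fin n × Fin n)) : Prop :=
  NonCrossing Δ ∧ ∀ Δ' : Set (Fin n × Fin n), NonCrossing Δ' → Δ ⊆ Δ' → Δ' = Δ

/-! ### The noncommutative polygon algebra `𝒜_n` -/

abbrev OffD (n : ℕ) := {p : Fin n × Fin n // p.1 ≠ p.2}

abbrev AGen (n : ℕ) := OffD n ⊕ OffD n

def xF {n : ℕ} (i j : Fin n) : FreeAlgebra ℚ (AGen n) :=
  if h : i ≠ j then FreeAlgebra.ι ℚ (Sum.inl ⟨(i, j), h⟩) else 1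

def xiF {n : ℕ} (i j : Fin n) : FreeAlgebra ℚ (AGen n) :=
  if h : i ≠ j then FreeAlgebra.ι ℚ (Sum.inr ⟨(i, j), h⟩) else 1

/-- The defining relations of `𝒜_n`: invertibility, triangle, and exchange relations. -/
inductive ARel (n : ℕ) : FreeAlgebra ℚ (AGen n) → FreeAlgebra ℚ (AGen n) → Prop
  | mul_inv {i j : Fin n} (h : i ≠ j) : ARel n (xF i j * xiF i j) 1
  | inv_mul {i j : Fin n} (h : i ≠ j) : ARel n (xiF i j * xF i j) 1
  | triangle {i j k : Fin n} (hij : i ≠ j) (hik : i ≠ k) (hjk : j ≠ k) :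
      ARel n (xF i j * xiF k j * xF k i) (xF i k * xiF j k * xF j i)
  | exchange {i j k l : Fin n} (h : IsCyclicSeq [i, j, k, l]) :
      ARel n (xF j l) (xF j k * xiF i k * xF i l + xF j i * xiF k i * xF k l)

/-- The noncommutative `n`-gon algebra `𝒜_n`. -/
abbrev NCPoly (n : ℕ) := RingQuot (ARel n)

/-- The generator `x_{ij} ∈ 𝒜_n` (junk value `1` when `i = j`). -/
def X {n : ℕ} (i j : Fin n) : NCPoly n :=
  RingQuot.mkAlgHom ℚ (ARel n) (xF i j)

/-- The generator `x_{ij}⁻¹ ∈ 𝒜_n`. -/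
def Xinv {n : ℕ} (i j : Fin n) : NCPoly n :=
  RingQuot.mkAlgHom ℚ (ARel n) (xiF i j)

/-- The noncommutative angle `T_i^{jk} = x_{ji}⁻¹ x_{jk} x_{ik}⁻¹ ∈ 𝒜_n`. -/
def Tang {n : ℕ} (i j k : Fin n) : NCPoly n := Xinv j i * X j k * Xinv i k

/-! ### Triangle groups -/

def tF {n : ℕ} (Δ : Set (Fin n × Fin n)) (i j : Fin n) : FreeGroup Δ :=
  if h : (i, j) ∈ Δ then FreeGroup.of (⟨(i, j), h⟩ : Δ) else 1

/-- The triangle relations of the triangle group `𝕋_Δ`. -/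
def triRels {n : ℕ} (Δ : Set (Fin n × Fin n)) : Set (FreeGroup Δ) :=
  { w | ∃ i j k : Fin n, i ≠ j ∧ i ≠ k ∧ j ≠ k ∧
      (i, j) ∈ Δ ∧ (j, i) ∈ Δ ∧ (i, k) ∈ Δ ∧ (k, i) ∈ Δ ∧ (j, k) ∈ Δ ∧ (k, j) ∈ Δ ∧
      w = tF Δ i j * (tF Δ k j)⁻¹ * tF Δ k i *
        (tF Δ i k * (tF Δ j k)⁻¹ * tF Δ j i)⁻¹ }

/-- The triangle group `𝕋_Δ` of a triangulation `Δ`. -/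
abbrev TriGroup {n : ℕ} (Δ : Set (Fin n × Fin n)) := PresentedGroup (triRels Δ)

/-- The generator `t_{ij} ∈ 𝕋_Δ` (junk value `1` when `(i,j) ∉ Δ`). -/
def tG {n : ℕ} (Δ : Set (Fin n × Fin n)) (i j : Fin n) : TriGroup Δ :=
  if h : (i, j) ∈ Δ then PresentedGroup.of (rels := triRels Δ) ⟨(i, j), h⟩ else 1

/-! ### The big triangle group `𝕋_n` -/

def btF {n : ℕ} (i j : Fin n) : FreeGroup (OffD n) :=
  if h : i ≠ j then FreeGroup.of (⟨(i, j), h⟩ : OffD n) else 1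

def bigRels (n : ℕ) : Set (FreeGroup (OffD n)) :=
  { w | ∃ i j k : Fin n, i ≠ j ∧ i ≠ k ∧ j ≠ k ∧
      w = btF i j * (btF k j)⁻¹ * btF k i * (btF i k * (btF j k)⁻¹ * btF j i)⁻¹ }

/-- The big triangle group `𝕋_n`. -/
abbrev BigTriGroup (n : ℕ) := PresentedGroup (bigRels n)

/-- The generator `t_{ij} ∈ 𝕋_n`. -/
def bigT {n : ℕ} (i j : Fin n) : BigTriGroup n :=
  if h : i ≠ j then PresentedGroup.of (rels := bigRels n) ⟨(i, j), h⟩ else 1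

/-! ### Distinguished subalgebras and subgroups -/

/-- `𝒜_Δ`: the subalgebra of `𝒜_n` generated by all `x_{ij}` together with the
`x_{ij}⁻¹` for `(i,j) ∈ Δ`. -/
def ADelta (n : ℕ) (Δ : Set (Fin n × Fin n)) : Subalgebra ℚ (NCPoly n) :=
  Algebra.adjoin ℚ
    ({a | ∃ i j : Fin n, i ≠ j ∧ a = X i j} ∪ {a | ∃ p ∈ Δ, a = Xinv p.1 p.2})

/-- `𝒬_n`: the subalgebra of `𝒜_n` generated by the `y_{ij}^k = x_{ki}⁻¹ x_{kj}`. -/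
def Qn (n : ℕ) : Subalgebra ℚ (NCPoly n) :=
  Algebra.adjoin ℚ
    {a : NCPoly n | ∃ i j k : Fin n, i ≠ j ∧ i ≠ k ∧ j ≠ k ∧ a = Xinv k i * X k j}

/-- `𝕌_Δ`: the subgroup of `𝕋_Δ` generated by the `u_{ij}^k = t_{ki}⁻¹ t_{kj}`. -/
def UDelta {n : ℕ} (Δ : Set (Fin n × Fin n)) : Subgroup (TriGroup Δ) :=
  Subgroup.closure
    {g | ∃ i j k : Fin n, (k, i) ∈ Δ ∧ (k, j) ∈ Δ ∧ g = (tG Δ k i)⁻¹ * tG Δ k j}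


/-- Generators of `G′_n`: the pairs `(i,j)` with `i < j`, together with the pairs `(i,1)`
for `i ≠ 1` (vertex `1` of `[n]` is `0 : Fin n`). -/
abbrev SGen (n : ℕ) := {p : Fin n × Fin n // p.1 < p.2 ∨ (p.2.1 = 0 ∧ p.1.1 ≠ 0)}

def sF {n : ℕ} (i j : Fin n) : FreeGroup (SGen n) :=
  if h : i < j ∨ (j.1 = 0 ∧ i.1 ≠ 0) then FreeGroup.of (⟨(i, j), h⟩ : SGen n) else 1

/-- The defining relations of `G′_n`:
`s_{i1}s_{j1}⁻¹s_{jk}s_{1k}⁻¹s_{1j}s_{ij}⁻¹s_{ik} = s_{ik}s_{1k}⁻¹s_{1j}s_{ij}⁻¹s_{i1}s_{j1}⁻¹s_{jk}`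
for `2 ≤ i < j < k ≤ n` (`o` denotes the vertex `1`). -/
def sRels (n : ℕ) : Set (FreeGroup (SGen n)) :=
  { w | ∃ i j k o : Fin n, o.1 = 0 ∧ 0 < i.1 ∧ i < j ∧ j < k ∧
      w = (sF i o * (sF j o)⁻¹ * sF j k * (sF o k)⁻¹ * sF o j * (sF i j)⁻¹ * sF i k) *
        (sF i k * (sF o k)⁻¹ * sF o j * (sF i j)⁻¹ * sF i o * (sF j o)⁻¹ * sF j k)⁻¹ }


/-! ### Auxiliary lemmas for Statement 12 -/

section Stmt12

variable {n : ℕ}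

private lemma chain1 {G : Type*} [Group G] {A B C D : G} (z : G) (h : A = B)
    (key : C * D⁻¹ = z * (A * B⁻¹) * z⁻¹) : C = D := by
  have h0 : C * D⁻¹ = 1 := by rw [key, h]; group
  exact mul_inv_eq_one.mp h0

private lemma chain4 {G : Type*} [Group G] {A₁ B₁ A₂ B₂ A₃ B₃ A₄ B₄ C D : G}
    (z₁ z₂ z₃ z₄ : G) (h₁ : A₁ = B₁) (h₂ : A₂ = B₂) (h₃ : A₃ = B₃) (h₄ : A₄ = B₄)
    (key : C * D⁻¹ = z₁ * (A₁ * B₁⁻¹) * z₁⁻¹ * (z₂ * (A₂ * B₂⁻¹) * z₂⁻¹) *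
      (z₃ * (A₃ * B₃⁻¹) * z₃⁻¹) * (z₄ * (A₄ * B₄⁻¹) * z₄⁻¹)) : C = D := by
  have h0 : C * D⁻¹ = 1 := by rw [key, h₁, h₂, h₃, h₄]; group
  exact mul_inv_eq_one.mp h0

/-- The generator `s_{ij}` of `G'_n` (junk `1` if `(i,j)` is not a generator index). -/
def sGen' (i j : Fin n) : PresentedGroup (sRels n) :=
  if h : i < j ∨ (j.1 = 0 ∧ i.1 ≠ 0) then PresentedGroup.of ⟨(i, j), h⟩ else 1

lemma mk_sF (i j : Fin n) : PresentedGroup.mk (sRels n) (sF i j) = sGen' i j := by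
  unfold sF sGen'
  by_cases h : i < j ∨ (j.1 = 0 ∧ i.1 ≠ 0)
  · rw [dif_pos h, dif_pos h]; rfl
  · rw [dif_neg h, dif_neg h, map_one]

lemma mk_btF (i j : Fin n) : PresentedGroup.mk (bigRels n) (btF i j) = bigT i j := by
  unfold btF bigT
  by_cases h : i ≠ j
  · rw [dif_pos h, dif_pos h]; rfl
  · rw [dif_neg h, dif_neg h, map_one]

lemma bigT_rel {i j k : Fin n} (hij : i ≠ j) (hik : i ≠ k) (hjk : j ≠ k) :
    bigT i j * (bigT k j)⁻¹ * bigT k i = bigT i k * (bigT j k)⁻¹ * bigT j i := by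
  have hmem : btF i j * (btF k j)⁻¹ * btF k i *
      (btF i k * (btF j k)⁻¹ * btF j i)⁻¹ ∈ bigRels n :=
    ⟨i, j, k, hij, hik, hjk, rfl⟩
  have h1 : PresentedGroup.mk (bigRels n)
      (btF i j * (btF k j)⁻¹ * btF k i * (btF i k * (btF j k)⁻¹ * btF j i)⁻¹) = 1 :=
    (QuotientGroup.eq_one_iff _).mpr (Subgroup.subset_normalClosure hmem)
  rw [map_mul, map_inv, mul_inv_eq_one] at h1
  simpa only [map_mul, map_inv, mk_btF] using h1

lemma sGen'_rel (hn : 0 < n) {i j k : Fin n} (hi : 0 < i.1) (hij : i < j) (hjk : j < k) :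
    sGen' i ⟨0, hn⟩ * (sGen' j ⟨0, hn⟩)⁻¹ * sGen' j k * (sGen' ⟨0, hn⟩ k)⁻¹ *
      sGen' ⟨0, hn⟩ j * (sGen' i j)⁻¹ * sGen' i k =
    sGen' i k * (sGen' ⟨0, hn⟩ k)⁻¹ * sGen' ⟨0, hn⟩ j * (sGen' i j)⁻¹ *
      sGen' i ⟨0, hn⟩ * (sGen' j ⟨0, hn⟩)⁻¹ * sGen' j k := by
  set o : Fin n := ⟨0, hn⟩ with ho
  have hmem : (sF i o * (sF j o)⁻¹ * sF j k * (sF o k)⁻¹ * sF o j * (sF i j)⁻¹ * sF i k) *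
      (sF i k * (sF o k)⁻¹ * sF o j * (sF i j)⁻¹ * sF i o * (sF j o)⁻¹ * sF j k)⁻¹ ∈ sRels n :=
    ⟨i, j, k, o, rfl, hi, hij, hjk, rfl⟩
  have h1 : PresentedGroup.mk (sRels n)
      ((sF i o * (sF j o)⁻¹ * sF j k * (sF o k)⁻¹ * sF o j * (sF i j)⁻¹ * sF i k) *
      (sF i k * (sF o k)⁻¹ * sF o j * (sF i j)⁻¹ * sF i o * (sF j o)⁻¹ * sF j k)⁻¹) = 1 :=
    (QuotientGroup.eq_one_iff _).mpr (Subgroup.subset_normalClosure hmem)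
  rw [map_mul, map_inv, mul_inv_eq_one] at h1
  simpa only [map_mul, map_inv, mk_sF] using h1

/-- The image of `t_{ij}` under the inverse map `𝕋_n → G'_n`. -/
def psiW (hn : 0 < n) (i j : Fin n) : PresentedGroup (sRels n) :=
  if i < j ∨ (j.1 = 0 ∧ i.1 ≠ 0) then sGen' i j
  else sGen' i ⟨0, hn⟩ * (sGen' j ⟨0, hn⟩)⁻¹ * sGen' j i *
    (sGen' ⟨0, hn⟩ i)⁻¹ * sGen' ⟨0, hn⟩ j

lemma psiW_pos (hn : 0 < n) {i j : Fin n} (h : i < j ∨ (j.1 = 0 ∧ i.1 ≠ 0)) :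
    psiW hn i j = sGen' i j := if_pos h

lemma psiW_neg (hn : 0 < n) {i j : Fin n} (h1 : j < i) (h2 : j.1 ≠ 0) :
    psiW hn i j = sGen' i ⟨0, hn⟩ * (sGen' j ⟨0, hn⟩)⁻¹ * sGen' j i *
      (sGen' ⟨0, hn⟩ i)⁻¹ * sGen' ⟨0, hn⟩ j := by
  refine if_neg ?_
  rintro (h | ⟨h, -⟩)
  · exact absurd h (not_lt.mpr h1.le)
  · exact h2 h

def phiF (p : SGen n) : BigTriGroup n := bigT (p : Fin n × Fin n).1 (p : Fin n × Fin n).2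

lemma lift_sF {i j : Fin n} (h : i < j ∨ (j.1 = 0 ∧ i.1 ≠ 0)) :
    FreeGroup.lift (phiF (n := n)) (sF i j) = bigT i j := by
  unfold sF
  rw [dif_pos h, FreeGroup.lift_apply_of]
  rfl

lemma phi_wd : ∀ r ∈ sRels n, FreeGroup.lift (phiF (n := n)) r = 1 := by
  rintro r ⟨i, j, k, o, ho, hi, hij, hjk, rfl⟩
  have hij' : i.1 < j.1 := hij
  have hjk' : j.1 < k.1 := hjk
  have c_io : i < o ∨ (o.1 = 0 ∧ i.1 ≠ 0) := Or.inr ⟨ho, hi.ne'⟩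
  have c_jo : j < o ∨ (o.1 = 0 ∧ j.1 ≠ 0) := Or.inr ⟨ho, (hi.trans hij').ne'⟩
  have c_ok : o < k ∨ (k.1 = 0 ∧ o.1 ≠ 0) := Or.inl (show o.1 < k.1 by omega)
  have c_oj : o < j ∨ (j.1 = 0 ∧ o.1 ≠ 0) := Or.inl (show o.1 < j.1 by omega)
  have c_ij : i < j ∨ (j.1 = 0 ∧ i.1 ≠ 0) := Or.inl hij
  have c_jk : j < k ∨ (k.1 = 0 ∧ j.1 ≠ 0) := Or.inl hjk
  have c_ik : i < k ∨ (k.1 = 0 ∧ i.1 ≠ 0) := Or.inl (hij.trans hjk)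
  simp only [map_mul, map_inv, lift_sF c_io, lift_sF c_jo, lift_sF c_ok, lift_sF c_oj,
    lift_sF c_ij, lift_sF c_jk, lift_sF c_ik]
  rw [mul_inv_eq_one]
  have nij : i ≠ j := ne_of_lt hij
  have nik : i ≠ k := ne_of_lt (hij.trans hjk)
  have njk : j ≠ k := ne_of_lt hjk
  have nio : i ≠ o := fun h => absurd (congrArg Fin.val h) (by omega)
  have njo : j ≠ o := fun h => absurd (congrArg Fin.val h) (by omega)
  have nko : k ≠ o := fun h => absurd (congrArg Fin.val h) (by omega)
  exact chain4 (bigT i o * (bigT j o)⁻¹)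
    (bigT i o * (bigT k o)⁻¹ * bigT k j * (bigT i j)⁻¹)
    1
    (bigT i k * (bigT o k)⁻¹ * bigT o j * (bigT i j)⁻¹)
    (bigT_rel njk njo nko) (bigT_rel nij nik njk).symm (bigT_rel nik nio nko).symm
    (bigT_rel nij nio njo) (by group)

def psiF (hn : 0 < n) (x : OffD n) : PresentedGroup (sRels n) :=
  psiW hn (x : Fin n × Fin n).1 (x : Fin n × Fin n).2

lemma lift_btF (hn : 0 < n) {i j : Fin n} (h : i ≠ j) :
    FreeGroup.lift (psiF hn) (btF i j) = psiW hn i j := by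
  unfold btF
  rw [dif_pos h, FreeGroup.lift_apply_of]
  rfl

lemma psiW_rel₀ (hn : 0 < n) {i j k : Fin n} (hij : i ≠ j) (hik : i ≠ k)
    (hjk' : j.1 < k.1) :
    psiW hn i j * (psiW hn k j)⁻¹ * psiW hn k i =
    psiW hn i k * (psiW hn j k)⁻¹ * psiW hn j i := by
  rcases Nat.lt_trichotomy i.1 j.1 with hij' | hij' | hij'
  · -- i < j < k
    by_cases hi0 : i.1 = 0
    · have hoi : (⟨0, hn⟩ : Fin n) = i := Fin.ext hi0.symm
      rw [psiW_pos hn (Or.inl hij'), psiW_neg hn (show j < k from hjk') (by omega),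
        psiW_pos hn (Or.inr ⟨hi0, by omega⟩), psiW_pos hn (Or.inl (show i < k by omega)),
        psiW_pos hn (Or.inl (show j < k from hjk')),
        psiW_pos hn (Or.inr ⟨hi0, by omega⟩), hoi]
      group
    · have hi : 0 < i.1 := Nat.pos_of_ne_zero hi0
      have h := sGen'_rel hn hi (show i < j from hij') (show j < k from hjk')
      rw [psiW_pos hn (Or.inl (show i < j from hij')),
        psiW_neg hn (show j < k from hjk') (by omega),
        psiW_neg hn (show i < k by omega) hi0,
        psiW_pos hn (Or.inl (show i < k by omega)),
        psiW_pos hn (Or.inl (show j < k from hjk')),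
        psiW_neg hn (show i < j from hij') hi0]
      exact chain1 (sGen' i k *
        (sGen' i ⟨0, hn⟩ * (sGen' j ⟨0, hn⟩)⁻¹ * sGen' j k * (sGen' ⟨0, hn⟩ k)⁻¹ *
          sGen' ⟨0, hn⟩ j * (sGen' i j)⁻¹ * sGen' i k)⁻¹) h.symm (by group)
  · exact absurd (Fin.ext hij') hij
  · -- j < i
    rcases Nat.lt_trichotomy i.1 k.1 with hik' | hik' | hik'
    · -- j < i < k
      by_cases hj0 : j.1 = 0
      · have hoj : (⟨0, hn⟩ : Fin n) = j := Fin.ext hj0.symm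
        rw [psiW_pos hn (Or.inr ⟨hj0, by omega⟩), psiW_pos hn (Or.inr ⟨hj0, by omega⟩),
          psiW_neg hn (show i < k from hik') (by omega),
          psiW_pos hn (Or.inl (show i < k from hik')),
          psiW_pos hn (Or.inl (show j < k from hjk')),
          psiW_pos hn (Or.inl (show j < i from hij')), hoj]
        group
      · have hj : 0 < j.1 := Nat.pos_of_ne_zero hj0
        have h := sGen'_rel hn hj (show j < i from hij') (show i < k from hik')
        rw [psiW_neg hn (show j < i from hij') hj0,
          psiW_neg hn (show j < k from hjk') hj0,
          psiW_neg hn (show i < k from hik') (by omega),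
          psiW_pos hn (Or.inl (show i < k from hik')),
          psiW_pos hn (Or.inl (show j < k from hjk')),
          psiW_pos hn (Or.inl (show j < i from hij'))]
        exact chain1 (sGen' i ⟨0, hn⟩ * (sGen' j ⟨0, hn⟩)⁻¹ * sGen' j i *
          (sGen' ⟨0, hn⟩ i)⁻¹ * sGen' ⟨0, hn⟩ k * (sGen' j k)⁻¹) h (by group)
    · exact absurd (Fin.ext hik') hik
    · -- j < k < i
      by_cases hj0 : j.1 = 0
      · have hoj : (⟨0, hn⟩ : Fin n) = j := Fin.ext hj0.symm
        rw [psiW_pos hn (Or.inr ⟨hj0, by omega⟩), psiW_pos hn (Or.inr ⟨hj0, by omega⟩),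
          psiW_pos hn (Or.inl (show k < i from hik')),
          psiW_neg hn (show k < i from hik') (by omega),
          psiW_pos hn (Or.inl (show j < k from hjk')),
          psiW_pos hn (Or.inl (show j < i by omega)), hoj]
        group
      · have hj : 0 < j.1 := Nat.pos_of_ne_zero hj0
        have h := sGen'_rel hn hj (show j < k from hjk') (show k < i from hik')
        rw [psiW_neg hn (show j < i by omega) hj0,
          psiW_neg hn (show j < k from hjk') hj0,
          psiW_pos hn (Or.inl (show k < i from hik')),
          psiW_neg hn (show k < i from hik') (by omega),
          psiW_pos hn (Or.inl (show j < k from hjk')),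
          psiW_pos hn (Or.inl (show j < i by omega))]
        exact chain1 (sGen' i ⟨0, hn⟩ * (sGen' j ⟨0, hn⟩)⁻¹) h.symm (by group)

lemma psiW_rel (hn : 0 < n) {i j k : Fin n} (hij : i ≠ j) (hik : i ≠ k) (hjk : j ≠ k) :
    psiW hn i j * (psiW hn k j)⁻¹ * psiW hn k i =
    psiW hn i k * (psiW hn j k)⁻¹ * psiW hn j i := by
  rcases Nat.lt_trichotomy j.1 k.1 with h | h | h
  · exact psiW_rel₀ hn hij hik h
  · exact absurd (Fin.ext h) hjk
  · exact (psiW_rel₀ hn hik hij h).symm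

lemma psi_wd (hn : 0 < n) : ∀ r ∈ bigRels n, FreeGroup.lift (psiF hn) r = 1 := by
  rintro r ⟨i, j, k, hij, hik, hjk, rfl⟩
  simp only [map_mul, map_inv, lift_btF hn hij, lift_btF hn hjk.symm, lift_btF hn hik.symm,
    lift_btF hn hik, lift_btF hn hjk, lift_btF hn hij.symm]
  rw [mul_inv_eq_one]
  exact psiW_rel hn hij hik hjk

lemma cond_ne {i j : Fin n} (h : i < j ∨ (j.1 = 0 ∧ i.1 ≠ 0)) : i ≠ j := by
  rintro rfl
  rcases h with h | ⟨h1, h2⟩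
  · exact lt_irrefl _ h
  · exact h2 h1

end Stmt12

/-- The assignments `s_{ij} ↦ t_{ij}` define a group isomorphism from
`G′_n` onto the big triangle group `𝕋_n`. -/
theorem big_triangle_presentation (n : ℕ) (hn : 3 ≤ n) :
    ∃ φ : PresentedGroup (sRels n) →* BigTriGroup n,
      (∀ p : SGen n,
        φ (PresentedGroup.of (rels := sRels n) p) =
          bigT (↑p : Fin n × Fin n).1 (↑p : Fin n × Fin n).2) ∧
      Function.Bijective φ := by
  have hn0 : 0 < n := by omega
  refine ⟨PresentedGroup.toGroup (phi_wd (n := n)), fun p => PresentedGroup.toGroup.of _, ?_⟩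
  set φ := PresentedGroup.toGroup (phi_wd (n := n)) with hφ
  set ψ := PresentedGroup.toGroup (psi_wd hn0) with hψ
  have hφsG : ∀ (i j : Fin n) (h : i < j ∨ (j.1 = 0 ∧ i.1 ≠ 0)), φ (sGen' i j) = bigT i j := by
    intro i j h
    rw [show sGen' i j = PresentedGroup.of ⟨(i, j), h⟩ from dif_pos h]
    exact PresentedGroup.toGroup.of _
  have hψbig : ∀ (i j : Fin n) (h : i ≠ j), ψ (bigT i j) = psiW hn0 i j := by
    intro i j h
    rw [show bigT i j = PresentedGroup.of ⟨(i, j), h⟩ from dif_pos h]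
    exact PresentedGroup.toGroup.of _
  have left : ∀ x, ψ (φ x) = x := by
    have : ψ.comp φ = MonoidHom.id _ := by
      apply PresentedGroup.ext
      intro p
      have h1 : φ (PresentedGroup.of p) =
          bigT (p : Fin n × Fin n).1 (p : Fin n × Fin n).2 :=
        PresentedGroup.toGroup.of _
      have h2 : ψ (bigT (p : Fin n × Fin n).1 (p : Fin n × Fin n).2) =
          psiW hn0 (p : Fin n × Fin n).1 (p : Fin n × Fin n).2 := hψbig _ _ (cond_ne p.2)
      show ψ (φ (PresentedGroup.of p)) = PresentedGroup.of p
      rw [h1, h2, psiW_pos hn0 p.2,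
        show sGen' (p : Fin n × Fin n).1 (p : Fin n × Fin n).2 =
          PresentedGroup.of ⟨((p : Fin n × Fin n).1, (p : Fin n × Fin n).2), p.2⟩
          from dif_pos p.2]
    intro x
    calc ψ (φ x) = (ψ.comp φ) x := rfl
    _ = x := by rw [this]; rfl
  have right : ∀ x, φ (ψ x) = x := by
    have : φ.comp ψ = MonoidHom.id _ := by
      apply PresentedGroup.ext
      intro x
      obtain ⟨⟨i, j⟩, hx⟩ := x
      have h1 : ψ (PresentedGroup.of (⟨(i, j), hx⟩ : OffD n)) = psiW hn0 i j :=
        PresentedGroup.toGroup.of _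
      show φ (ψ (PresentedGroup.of _)) = PresentedGroup.of _
      rw [h1]
      have hbig : bigT i j = PresentedGroup.of (⟨(i, j), hx⟩ : OffD n) := dif_pos hx
      by_cases hc : i < j ∨ (j.1 = 0 ∧ i.1 ≠ 0)
      · rw [psiW_pos hn0 hc, hφsG i j hc, hbig]
      · push_neg at hc
        have hji : j < i := lt_of_le_of_ne hc.1 (Ne.symm hx)
        have hj0 : j.1 ≠ 0 := by
          intro h0
          have : i.1 ≠ 0 := by
            intro hi0
            exact hx (Fin.ext (hi0.trans h0.symm))
          exact this (hc.2 h0)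
        have hi0 : i.1 ≠ 0 := by
          have : j.1 < i.1 := hji
          omega
        rw [psiW_neg hn0 hji hj0, map_mul, map_mul, map_mul, map_mul, map_inv, map_inv,
          hφsG i ⟨0, hn0⟩ (Or.inr ⟨rfl, hi0⟩), hφsG j ⟨0, hn0⟩ (Or.inr ⟨rfl, hj0⟩),
          hφsG j i (Or.inl hji),
          hφsG ⟨0, hn0⟩ i (Or.inl (show (0 : ℕ) < i.1 from Nat.pos_of_ne_zero hi0)),
          hφsG ⟨0, hn0⟩ j (Or.inl (show (0 : ℕ) < j.1 from Nat.pos_of_ne_zero hj0)), ← hbig]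
        have nio : i ≠ ⟨0, hn0⟩ := fun h => hi0 (congrArg Fin.val h)
        have njo : j ≠ ⟨0, hn0⟩ := fun h => hj0 (congrArg Fin.val h)
        exact chain1 1 (bigT_rel hx nio njo).symm (by group)
    intro x
    calc φ (ψ x) = (φ.comp ψ) x := rfl
    _ = x := by rw [this]; rfl
  exact ⟨Function.LeftInverse.injective left, Function.RightInverse.surjective right⟩

end NCPolygon
end
end

section
/- (Free factorization of 𝒜_n.) For each n ≥ 2, the algebra 𝒜_n is the free product (coproduct of ℚ-algebras) of the free Laurent polynomial algebra ℚ[F_n] and 𝒬_n, with respect to the maps c_i ↦ x_{i,i⁻} and the inclusion 𝒬_n ⊆ 𝒜_n. Concretely: for every ℚ-algebra B, every n-tuple (b₁,…,b_n) of units of B, and every ℚ-algebra homomorphism v: 𝒬_n → B, there exists a unique ℚ-algebra homomorphism h: 𝒜_n → B such that h(x_{i,i⁻}) = b_i for all i ∈ [n] and h(q) = v(q) for all q ∈ 𝒬_n. -/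
open scoped Classical

noncomputable section

namespace NCPolygon

/-! ### Auxiliary lemmas -/

section Aux

variable {n : ℕ}

theorem X_mul_Xinv {i j : Fin n} (h : i ≠ j) : X i j * Xinv i j = 1 := by
  have := RingQuot.mkAlgHom_rel ℚ (ARel.mul_inv h)
  rw [map_mul, map_one] at this
  exact this

theorem Xinv_mul_X {i j : Fin n} (h : i ≠ j) : Xinv i j * X i j = 1 := by
  have := RingQuot.mkAlgHom_rel ℚ (ARel.inv_mul h)
  rw [map_mul, map_one] at this
  exact this

theorem triangle_rel {i j k : Fin n} (hij : i ≠ j) (hik : i ≠ k) (hjk : j ≠ k) :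
    X i j * Xinv k j * X k i = X i k * Xinv j k * X j i := by
  have := RingQuot.mkAlgHom_rel ℚ (ARel.triangle hij hik hjk)
  rw [map_mul, map_mul, map_mul, map_mul] at this
  exact this

theorem exchange_rel {i j k l : Fin n} (h : IsCyclicSeq [i, j, k, l]) :
    X j l = X j k * Xinv i k * X i l + X j i * Xinv k i * X k l := by
  have := RingQuot.mkAlgHom_rel ℚ (ARel.exchange h)
  rw [map_add, map_mul, map_mul, map_mul, map_mul] at this
  exact this

theorem cpred_ne (hn : 2 ≤ n) (i : Fin n) : i ≠ cpred i := by
  intro h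
  have hv : i.1 = (i.1 + (n - 1)) % n := congrArg Fin.val h
  have hlt := i.isLt
  rcases Nat.eq_zero_or_pos i.1 with h0 | h0
  · rw [h0, Nat.zero_add, Nat.mod_eq_of_lt (by omega)] at hv
    omega
  · have he : i.1 + (n - 1) = (i.1 - 1) + n := by omega
    rw [he, Nat.add_mod_right, Nat.mod_eq_of_lt (by omega)] at hv
    omega

theorem Ymem (hn : 2 ≤ n) {i j : Fin n} (h : i ≠ j) :
    Xinv i (cpred i) * X i j ∈ Qn n := by
  by_cases hc : j = cpred i
  · rw [hc, Xinv_mul_X (cpred_ne hn i)]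
    exact one_mem _
  · exact Algebra.subset_adjoin
      ⟨cpred i, j, i, fun e => hc e.symm, (cpred_ne hn i).symm, h.symm, rfl⟩

theorem Zmem (hn : 2 ≤ n) {i j : Fin n} (h : i ≠ j) :
    Xinv i j * X i (cpred i) ∈ Qn n := by
  by_cases hc : j = cpred i
  · rw [hc, Xinv_mul_X (cpred_ne hn i)]
    exact one_mem _
  · exact Algebra.subset_adjoin ⟨j, cpred i, i, hc, h.symm, (cpred_ne hn i).symm, rfl⟩

/-- The element `y^i_{i⁻,j} = x_{i,i⁻}⁻¹ x_{ij}` of `𝒬_n`. -/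
def Yel (hn : 2 ≤ n) {i j : Fin n} (h : i ≠ j) : Qn n :=
  ⟨Xinv i (cpred i) * X i j, Ymem hn h⟩

/-- The element `y^i_{j,i⁻} = x_{ij}⁻¹ x_{i,i⁻}` of `𝒬_n`. -/
def Zel (hn : 2 ≤ n) {i j : Fin n} (h : i ≠ j) : Qn n :=
  ⟨Xinv i j * X i (cpred i), Zmem hn h⟩

@[simp] theorem Yel_coe (hn : 2 ≤ n) {i j : Fin n} (h : i ≠ j) :
    (Yel hn h : NCPoly n) = Xinv i (cpred i) * X i j := rfl

@[simp] theorem Zel_coe (hn : 2 ≤ n) {i j : Fin n} (h : i ≠ j) :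
    (Zel hn h : NCPoly n) = Xinv i j * X i (cpred i) := rfl

theorem cancel_mid (hn : 2 ≤ n) (i : Fin n) (d : NCPoly n) :
    X i (cpred i) * (Xinv i (cpred i) * d) = d := by
  rw [← mul_assoc, X_mul_Xinv (cpred_ne hn i), one_mul]

theorem Algebra.adjoin_induction' {R A : Type*} [CommSemiring R] [Semiring A] [Algebra R A]
    {s : Set A} {p : Algebra.adjoin R s → Prop}
    (mem : ∀ x (h : x ∈ s), p ⟨x, Algebra.subset_adjoin h⟩)
    (am : ∀ r, p (algebraMap R _ r))
    (add : ∀ x y, p x → p y → p (x + y)) (mul : ∀ x y, p x → p y → p (x * y))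
    (x : Algebra.adjoin R s) : p x :=
  Subtype.recOn x fun x hx => by
    induction hx using _root_.Algebra.adjoin_induction with
    | mem x h => exact mem x h
    | algebraMap r => exact am r
    | add x y hx hy h1 h2 => exact add _ _ h1 h2
    | mul x y hx hy h1 h2 => exact mul _ _ h1 h2

end Aux


universe u

/-- **Free factorization of `𝒜_n`.** `𝒜_n` is the free product of the free
Laurent polynomial algebra on `c₁, …, c_n` (with `c_i ↦ x_{i,i⁻}`) and `𝒬_n`: for any
algebra `B`, any units `b₁, …, b_n` of `B` and any homomorphism `v : 𝒬_n → B` there is a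
unique algebra homomorphism `h : 𝒜_n → B` with `h(x_{i,i⁻}) = b_i` and `h|_{𝒬_n} = v`. -/
theorem free_factorization (n : ℕ) (hn : 2 ≤ n) (B : Type u) [Ring B] [Algebra ℚ B]
    (b : Fin n → B) (hb : ∀ i, IsUnit (b i)) (v : Qn n →ₐ[ℚ] B) :
    ∃! h : NCPoly n →ₐ[ℚ] B,
      (∀ i : Fin n, h (X i (cpred i)) = b i) ∧ ∀ q : Qn n, h ↑q = v q := by
  have hcp : ∀ i : Fin n, i ≠ cpred i := cpred_ne hn
  have hub : ∀ i : Fin n, (↑(hb i).unit⁻¹ : B) * b i = 1 := fun i => (hb i).val_inv_mul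
  have hbu : ∀ i : Fin n, b i * (↑(hb i).unit⁻¹ : B) = 1 := fun i => (hb i).mul_val_inv
  have hcan : ∀ (k : Fin n) (x y : B), (x * ↑(hb k).unit⁻¹) * (b k * y) = x * y := by
    intro k x y
    rw [mul_assoc, ← mul_assoc _ (b k) y, hub k, one_mul]
  set F : AGen n → B := fun g =>
    match g with
    | Sum.inl ⟨(i, j), h⟩ => b i * v (Yel hn h)
    | Sum.inr ⟨(i, j), h⟩ => v (Zel hn h) * ↑(hb i).unit⁻¹ with hF
  set f : FreeAlgebra ℚ (AGen n) →ₐ[ℚ] B := FreeAlgebra.lift ℚ F with hfdef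
  have hfX : ∀ {i j : Fin n} (h : i ≠ j), f (xF i j) = b i * v (Yel hn h) := by
    intro i j h
    rw [xF, dif_pos h]
    exact FreeAlgebra.lift_ι_apply F _
  have hfXi : ∀ {i j : Fin n} (h : i ≠ j),
      f (xiF i j) = v (Zel hn h) * ↑(hb i).unit⁻¹ := by
    intro i j h
    rw [xiF, dif_pos h]
    exact FreeAlgebra.lift_ι_apply F _
  have hrel : ∀ ⦃x y : FreeAlgebra ℚ (AGen n)⦄, ARel n x y → f x = f y := by
    intro x y hxy
    induction hxy with
    | @mul_inv i j h =>
      rw [map_mul, map_one, hfX h, hfXi h]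
      have h1 : Yel hn h * Zel hn h = 1 := by
        apply Subtype.ext
        show (Xinv i (cpred i) * X i j) * (Xinv i j * X i (cpred i)) = 1
        rw [mul_assoc, ← mul_assoc (X i j), X_mul_Xinv h, one_mul, Xinv_mul_X (hcp i)]
      calc b i * v (Yel hn h) * (v (Zel hn h) * ↑(hb i).unit⁻¹)
          = b i * (v (Yel hn h) * v (Zel hn h)) * ↑(hb i).unit⁻¹ := by
            simp only [mul_assoc]
        _ = 1 := by rw [← map_mul, h1, map_one, mul_one, hbu i]
    | @inv_mul i j h =>
      rw [map_mul, map_one, hfXi h, hfX h, hcan i, ← map_mul]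
      have h1 : Zel hn h * Yel hn h = 1 := by
        apply Subtype.ext
        show (Xinv i j * X i (cpred i)) * (Xinv i (cpred i) * X i j) = 1
        rw [mul_assoc, cancel_mid hn i, Xinv_mul_X h]
      rw [h1, map_one]
    | @triangle i j k hij hik hjk =>
      rw [map_mul, map_mul, map_mul, map_mul,
        hfX hij, hfXi hjk.symm, hfX hik.symm, hfX hik, hfXi hjk, hfX hij.symm,
        ← mul_assoc (b i * v (Yel hn hij)) (v (Zel hn hjk.symm)), hcan k,
        ← mul_assoc (b i * v (Yel hn hik)) (v (Zel hn hjk)), hcan j]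
      have hQ : Yel hn hij * (Zel hn hjk.symm * Yel hn hik.symm)
          = Yel hn hik * (Zel hn hjk * Yel hn hij.symm) := by
        apply Subtype.ext
        show Xinv i (cpred i) * X i j *
            ((Xinv k j * X k (cpred k)) * (Xinv k (cpred k) * X k i))
            = Xinv i (cpred i) * X i k *
            ((Xinv j k * X j (cpred j)) * (Xinv j (cpred j) * X j i))
        have ht := triangle_rel hij hik hjk
        simp only [mul_assoc] at ht ⊢
        rw [cancel_mid hn k, cancel_mid hn j, ht]
      simp only [mul_assoc, ← map_mul]
      rw [hQ]
    | @exchange i j k l h =>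
      have hnd := h.1
      simp only [List.nodup_cons, List.mem_cons, List.mem_singleton, List.not_mem_nil,
        or_false, not_or, List.nodup_nil, and_true] at hnd
      obtain ⟨⟨hij, hik, hil⟩, ⟨hjk, hjl⟩, hkl, -⟩ := hnd
      rw [map_add, map_mul, map_mul, map_mul, map_mul,
        hfX hjl, hfX hjk, hfXi hik, hfX hil, hfX (Ne.symm hij), hfXi (Ne.symm hik),
        hfX hkl,
        ← mul_assoc (b j * v (Yel hn hjk)) (v (Zel hn hik)), hcan i,
        ← mul_assoc (b j * v (Yel hn (Ne.symm hij))) (v (Zel hn (Ne.symm hik))), hcan k]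
      have hQ : Yel hn hjl
          = Yel hn hjk * (Zel hn hik * Yel hn hil)
            + Yel hn (Ne.symm hij) * (Zel hn (Ne.symm hik) * Yel hn hkl) := by
        apply Subtype.ext
        show Xinv j (cpred j) * X j l
            = Xinv j (cpred j) * X j k *
                ((Xinv i k * X i (cpred i)) * (Xinv i (cpred i) * X i l))
              + Xinv j (cpred j) * X j i *
                ((Xinv k i * X k (cpred k)) * (Xinv k (cpred k) * X k l))
        have hex := exchange_rel h
        simp only [mul_assoc] at hex ⊢
        rw [cancel_mid hn i, cancel_mid hn k, ← mul_add, ← hex]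
      simp only [mul_assoc, ← map_mul]
      rw [← mul_add, ← map_add, ← hQ]
  set hA : NCPoly n →ₐ[ℚ] B := RingQuot.liftAlgHom ℚ ⟨f, hrel⟩ with hAdef
  have hAmk : ∀ x : FreeAlgebra ℚ (AGen n),
      hA (RingQuot.mkAlgHom ℚ (ARel n) x) = f x := fun x =>
    RingQuot.liftAlgHom_mkAlgHom_apply ℚ f hrel x
  have hAX : ∀ {i j : Fin n} (hij : i ≠ j), hA (X i j) = b i * v (Yel hn hij) := by
    intro i j hij
    rw [X, hAmk]
    exact hfX hij
  have hAXi : ∀ {i j : Fin n} (hij : i ≠ j),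
      hA (Xinv i j) = v (Zel hn hij) * ↑(hb i).unit⁻¹ := by
    intro i j hij
    rw [Xinv, hAmk]
    exact hfXi hij
  have cond1 : ∀ i : Fin n, hA (X i (cpred i)) = b i := by
    intro i
    rw [hAX (hcp i)]
    have h1 : Yel hn (hcp i) = 1 := Subtype.ext (Xinv_mul_X (hcp i))
    rw [h1, map_one, mul_one]
  have cond2 : ∀ q : Qn n, hA ↑q = v q := by
    intro q
    refine Algebra.adjoin_induction' (p := fun q : Qn n => hA ↑q = v q) ?_ ?_ ?_ ?_ q
    · rintro x ⟨i, j, k, hij, hik, hjk, rfl⟩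
      have hki : k ≠ i := hik.symm
      have hkj : k ≠ j := hjk.symm
      have key : hA (Xinv k i * X k j) = v (Zel hn hki * Yel hn hkj) := by
        rw [map_mul, hAXi hki, hAX hkj, hcan k, ← map_mul]
      rw [key]
      congr 1
      apply Subtype.ext
      show (Xinv k i * X k (cpred k)) * (Xinv k (cpred k) * X k j) = Xinv k i * X k j
      rw [mul_assoc, cancel_mid hn k]
    · intro r
      rw [Subalgebra.coe_algebraMap, AlgHom.commutes]
      exact (v.commutes r).symm
    · intro x y hx hy
      simp only [AddMemClass.coe_add, map_add, hx, hy]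
      exact (map_add v x y).symm
    · intro x y hx hy
      simp only [MulMemClass.coe_mul, map_mul, hx, hy]
      exact (map_mul v x y).symm
  have key : ∀ g : NCPoly n →ₐ[ℚ] B,
      ((∀ i : Fin n, g (X i (cpred i)) = b i) ∧ ∀ q : Qn n, g ↑q = v q) →
      ∀ {i j : Fin n} (hij : i ≠ j),
        g (X i j) = b i * v (Yel hn hij) ∧
        g (Xinv i j) = v (Zel hn hij) * ↑(hb i).unit⁻¹ := by
    rintro g ⟨hg1, hg2⟩ i j hij
    have hXij : g (X i j) = b i * v (Yel hn hij) := by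
      have hdec : X i j = X i (cpred i) * ↑(Yel hn hij) := by
        rw [Yel_coe, cancel_mid hn i]
      rw [hdec, map_mul, hg1 i, hg2]
    have hXinv_c : g (Xinv i (cpred i)) = ↑(hb i).unit⁻¹ := by
      have h1 : b i * g (Xinv i (cpred i)) = 1 := by
        rw [← hg1 i, ← map_mul, X_mul_Xinv (hcp i), map_one]
      calc g (Xinv i (cpred i)) = 1 * g (Xinv i (cpred i)) := (one_mul _).symm
        _ = ↑(hb i).unit⁻¹ * (b i * g (Xinv i (cpred i))) := by
            rw [← mul_assoc, hub i, one_mul]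
        _ = ↑(hb i).unit⁻¹ := by rw [h1, mul_one]
    have hXiij : g (Xinv i j) = v (Zel hn hij) * ↑(hb i).unit⁻¹ := by
      have hdec : Xinv i j = ↑(Zel hn hij) * Xinv i (cpred i) := by
        rw [Zel_coe, mul_assoc, X_mul_Xinv (hcp i), mul_one]
      rw [hdec, map_mul, hg2, hXinv_c]
    exact ⟨hXij, hXiij⟩
  refine ⟨hA, ⟨cond1, cond2⟩, ?_⟩
  intro g hg
  refine AlgHom.ext fun a => ?_
  obtain ⟨x, rfl⟩ := RingQuot.mkAlgHom_surjective ℚ (ARel n) a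
  induction x using FreeAlgebra.induction with
  | grade0 r => simp only [AlgHom.commutes]
  | grade1 x =>
    rcases x with ⟨⟨i, j⟩, hij⟩ | ⟨⟨i, j⟩, hij⟩
    · have hx : (FreeAlgebra.ι ℚ (Sum.inl ⟨(i, j), hij⟩) : FreeAlgebra ℚ (AGen n))
          = xF i j := by rw [xF, dif_pos hij]
      rw [hx]
      show g (X i j) = hA (X i j)
      rw [(key g hg hij).1, (key hA ⟨cond1, cond2⟩ hij).1]
    · have hx : (FreeAlgebra.ι ℚ (Sum.inr ⟨(i, j), hij⟩) : FreeAlgebra ℚ (AGen n))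
          = xiF i j := by rw [xiF, dif_pos hij]
      rw [hx]
      show g (Xinv i j) = hA (Xinv i j)
      rw [(key g hg hij).2, (key hA ⟨cond1, cond2⟩ hij).2]
  | mul a b iha ihb => simp only [map_mul, iha, ihb]
  | add a b iha ihb => simp only [map_add, iha, ihb]

end NCPolygon
end
end

section
/- Let n ≥ 2 and let Δ be a triangulation of [n]. For (k,i),(k,j) ∈ Δ set u_{ij}^k := t_{ki}⁻¹t_{kj} ∈ 𝕋_Δ, and let 𝕌_Δ be the subgroup of 𝕋_Δ generated by all such elements u_{ij}^k. Then there is a group isomorphism from 𝕋_Δ onto the free product F_n ∗ 𝕌_Δ (the coproduct of the free group F_n on generators c₁,…,c_n with 𝕌_Δ) which sends t_{ij} to ι₁(c_i)·ι₂(u_{i⁻,j}^i) for every (i,j) ∈ Δ, where ι₁, ι₂ are the canonical inclusions of the two factors and u_{i⁻,j}^i = t_{i,i⁻}⁻¹t_{ij}. -/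
open scoped Classical

noncomputable section

namespace NCPolygon

/-! ### Auxiliary combinatorial lemmas -/

section Aux

variable {n : ℕ}

lemma sorted4 {a b c d : Fin n} (h : ([a,b,c,d] : List (Fin n)).Pairwise (· < ·)) :
    a.1 < b.1 ∧ b.1 < c.1 ∧ c.1 < d.1 := by
  simp only [List.pairwise_cons, List.mem_cons, List.mem_singleton, List.not_mem_nil] at h
  exact ⟨h.1 b (by simp), (h.2.1) c (by simp), h.2.2.1 d (by simp)⟩

lemma rot1 {α : Type*} (a b c d : α) : ([a,b,c,d] : List α).rotate 1 = [b,c,d,a] := by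
  simp [List.rotate_cons_succ]

lemma rot2 {α : Type*} (a b c d : α) : ([a,b,c,d] : List α).rotate 2 = [c,d,a,b] := by
  rw [show (2:ℕ) = 1 + 1 from rfl, ← List.rotate_rotate, rot1, rot1]

lemma rot3 {α : Type*} (a b c d : α) : ([a,b,c,d] : List α).rotate 3 = [d,a,b,c] := by
  rw [show (3:ℕ) = 2 + 1 from rfl, ← List.rotate_rotate, rot2, rot1]

lemma csucc_cpred (hn : 2 ≤ n) (i : Fin n) : csucc (cpred i) = i := by
  have hi := i.isLt
  apply Fin.ext
  show ((i.1 + (n-1)) % n + 1) % n = i.1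
  rcases Nat.lt_or_ge (i.1 + (n-1)) n with h | h
  · rw [Nat.mod_eq_of_lt h]
    have : i.1 + (n-1) + 1 = i.1 + n := by omega
    rw [this, Nat.add_mod_right, Nat.mod_eq_of_lt hi]
  · have h1 : i.1 + (n-1) = (i.1 - 1) + n := by omega
    rw [h1, Nat.add_mod_right, Nat.mod_eq_of_lt (show i.1 - 1 < n by omega),
      show i.1 - 1 + 1 = i.1 by omega, Nat.mod_eq_of_lt hi]

lemma csucc_ne (hn : 2 ≤ n) (i : Fin n) : csucc i ≠ i := by
  intro h
  have h2 : (i.1 + 1) % n = i.1 := congrArg Fin.val h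
  have hi := i.isLt
  rcases Nat.lt_or_ge (i.1+1) n with h1 | h1
  · rw [Nat.mod_eq_of_lt h1] at h2; omega
  · have h3 : i.1 + 1 = n := by omega
    rw [h3, Nat.mod_self] at h2; omega

lemma not_cyclic_csucc (a b c d : Fin n) (h : c = csucc a) :
    ¬ IsCyclicSeq [a, b, c, d] := by
  rintro ⟨hnd, k, hs⟩
  have hlen : ([a,b,c,d] : List (Fin n)).length = 4 := rfl
  have hrw : ([a,b,c,d] : List (Fin n)).rotate (k % 4) = ([a,b,c,d] : List (Fin n)).rotate k := by
    rw [← hlen]; exact List.rotate_mod _ _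
  rw [← hrw] at hs
  have hc : c.1 = (a.1 + 1) % n := by rw [h]; rfl
  have ha := a.isLt; have hb := b.isLt; have hcl := c.isLt; have hd := d.isLt
  have hceq : (c.1 = a.1 + 1 ∧ a.1 + 1 < n) ∨ (c.1 = 0 ∧ a.1 + 1 = n) := by
    rcases Nat.lt_or_ge (a.1+1) n with h1 | h1
    · left; rw [Nat.mod_eq_of_lt h1] at hc; exact ⟨hc, h1⟩
    · right; have h3 : a.1 + 1 = n := by omega
      rw [h3, Nat.mod_self] at hc; exact ⟨hc, h3⟩
  have h4 : k % 4 = 0 ∨ k % 4 = 1 ∨ k % 4 = 2 ∨ k % 4 = 3 := by omega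
  rcases h4 with h4 | h4 | h4 | h4 <;> rw [h4] at hs
  · rw [List.rotate_zero] at hs; have := sorted4 hs; omega
  · rw [rot1] at hs; have := sorted4 hs; omega
  · rw [rot2] at hs; have := sorted4 hs; omega
  · rw [rot3] at hs; have := sorted4 hs; omega

lemma cyclic_rotate1 {a b c d : Fin n} (h : IsCyclicSeq [a,b,c,d]) :
    IsCyclicSeq [b,c,d,a] := by
  obtain ⟨hnd, k, hs⟩ := h
  constructor
  · have h1 : ([b,c,d,a] : List (Fin n)) = ([a,b,c,d] : List (Fin n)).rotate 1 := (rot1 a b c d).symm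
    rw [h1]; exact List.nodup_rotate.mpr hnd
  · refine ⟨k + 3, ?_⟩
    have h1 : ([b,c,d,a] : List (Fin n)).rotate (k+3)
        = ([a,b,c,d] : List (Fin n)).rotate (1 + (k + 3)) := by
      rw [← rot1 a b c d, List.rotate_rotate]
    rw [h1, show 1 + (k+3) = k + 4 from by omega, ← List.rotate_rotate]
    have h2 : (([a,b,c,d] : List (Fin n)).rotate k).rotate 4
        = ([a,b,c,d] : List (Fin n)).rotate k := by
      have h3 : (([a,b,c,d] : List (Fin n)).rotate k).length = 4 := by
        rw [List.length_rotate]; rfl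
      rw [← h3, List.rotate_length]
    rw [h2]; exact hs

lemma succ_mem (hn : 2 ≤ n) {Δ : Set (Fin n × Fin n)} (hΔ : IsTriangulation Δ) (j : Fin n) :
    (csucc j, j) ∈ Δ := by
  have hnc : NonCrossing (Δ ∪ {(csucc j, j)}) := by
    constructor
    · rintro p (hp | hp)
      · exact hΔ.1.1 p hp
      · rw [Set.mem_singleton_iff] at hp; subst hp; exact csucc_ne hn j
    · rintro p hp q hq hcr
      rcases hq with hq | hq
      · rcases hp with hp | hp
        · exact hΔ.1.2 p hp q hq hcr
        · rw [Set.mem_singleton_iff] at hp; subst hp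
          exact not_cyclic_csucc j q.2 (csucc j) q.1 rfl (cyclic_rotate1 (cyclic_rotate1 hcr))
      · rw [Set.mem_singleton_iff] at hq; subst hq
        exact not_cyclic_csucc j p.1 (csucc j) p.2 rfl
          (cyclic_rotate1 (cyclic_rotate1 (cyclic_rotate1 hcr)))
  have h := hΔ.2 _ hnc Set.subset_union_left
  rw [← h]; exact Set.mem_union_right _ rfl

lemma pred_mem (hn : 2 ≤ n) {Δ : Set (Fin n × Fin n)} (hΔ : IsTriangulation Δ) (i : Fin n) :
    (i, cpred i) ∈ Δ := by
  have h := succ_mem hn hΔ (cpred i)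
  rwa [csucc_cpred hn] at h

end Aux

/-! ### Group-theoretic construction -/

section Main

variable {n : ℕ} {Δ : Set (Fin n × Fin n)}

/-- The element `u_{i⁻,j}^i = t_{i,i⁻}⁻¹ t_{ij}` of `𝕌_Δ`. -/
def uu (hn : 2 ≤ n) (hΔ : IsTriangulation Δ) (i j : Fin n) (hij : (i, j) ∈ Δ) : UDelta Δ :=
  ⟨(tG Δ i (cpred i))⁻¹ * tG Δ i j,
    Subgroup.subset_closure ⟨cpred i, j, i, pred_mem hn hΔ i, hij, rfl⟩⟩

lemma tG_of {i j : Fin n} (h : (i, j) ∈ Δ) :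
    tG Δ i j = PresentedGroup.of (rels := triRels Δ) ⟨(i, j), h⟩ := dif_pos h

lemma mk_tF {i j : Fin n} (h : (i, j) ∈ Δ) :
    (QuotientGroup.mk' (Subgroup.normalClosure (triRels Δ))) (tF Δ i j) = tG Δ i j := by
  rw [tF, dif_pos h, tG_of h]; rfl

lemma tri {i j k : Fin n} (hij : i ≠ j) (hik : i ≠ k) (hjk : j ≠ k)
    (h1 : (i,j) ∈ Δ) (h2 : (j,i) ∈ Δ) (h3 : (i,k) ∈ Δ) (h4 : (k,i) ∈ Δ)
    (h5 : (j,k) ∈ Δ) (h6 : (k,j) ∈ Δ) :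
    tG Δ i j * (tG Δ k j)⁻¹ * tG Δ k i = tG Δ i k * (tG Δ j k)⁻¹ * tG Δ j i := by
  have hw : tF Δ i j * (tF Δ k j)⁻¹ * tF Δ k i *
      (tF Δ i k * (tF Δ j k)⁻¹ * tF Δ j i)⁻¹ ∈ triRels Δ :=
    ⟨i, j, k, hij, hik, hjk, h1, h2, h3, h4, h5, h6, rfl⟩
  have h0 : (QuotientGroup.mk' (Subgroup.normalClosure (triRels Δ)))
      (tF Δ i j * (tF Δ k j)⁻¹ * tF Δ k i * (tF Δ i k * (tF Δ j k)⁻¹ * tF Δ j i)⁻¹) = 1 :=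
    (QuotientGroup.eq_one_iff _).mpr (Subgroup.subset_normalClosure hw)
  rw [map_mul, map_mul, map_inv, map_mul, map_inv, map_mul, map_mul, map_inv,
    mk_tF h1, mk_tF h6, mk_tF h4, mk_tF h3, mk_tF h5, mk_tF h2] at h0
  exact mul_inv_eq_one.mp h0

/-- The target of the generator `t_{ij}` under the isomorphism. -/
def ff (hn : 2 ≤ n) (hΔ : IsTriangulation Δ) :
    Δ → Monoid.Coprod (FreeGroup (Fin n)) (UDelta Δ) :=
  fun p => Monoid.Coprod.inl (FreeGroup.of p.1.1) *
    Monoid.Coprod.inr (uu hn hΔ p.1.1 p.1.2 p.2)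

lemma lift_tF (hn : 2 ≤ n) (hΔ : IsTriangulation Δ) {i j : Fin n} (h : (i, j) ∈ Δ) :
    FreeGroup.lift (ff hn hΔ) (tF Δ i j) =
      Monoid.Coprod.inl (FreeGroup.of i) * Monoid.Coprod.inr (uu hn hΔ i j h) := by
  rw [tF, dif_pos h, FreeGroup.lift_apply_of]; rfl

lemma triple {G H : Type*} [Group G] [Group H] (x y : G) (u v w : H) :
    (Monoid.Coprod.inl x * Monoid.Coprod.inr u) * (Monoid.Coprod.inl y * Monoid.Coprod.inr v)⁻¹ *
      (Monoid.Coprod.inl y * Monoid.Coprod.inr w)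
    = Monoid.Coprod.inl x * Monoid.Coprod.inr (u * v⁻¹ * w) := by
  simp only [mul_inv_rev, map_mul, map_inv]
  group

lemma pair {G H : Type*} [Group G] [Group H] (y : G) (v w : H) :
    (Monoid.Coprod.inl y * Monoid.Coprod.inr v)⁻¹ * (Monoid.Coprod.inl y * Monoid.Coprod.inr w)
    = Monoid.Coprod.inr (v⁻¹ * w) := by
  simp only [mul_inv_rev, map_mul, map_inv]
  group

lemma hrel (hn : 2 ≤ n) (hΔ : IsTriangulation Δ) :
    ∀ r ∈ triRels Δ, FreeGroup.lift (ff hn hΔ) r = 1 := by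
  rintro r ⟨i, j, k, hij, hik, hjk, h1, h2, h3, h4, h5, h6, rfl⟩
  rw [map_mul, map_mul, map_inv, map_mul, map_inv, map_mul, map_mul, map_inv,
    lift_tF hn hΔ h1, lift_tF hn hΔ h6, lift_tF hn hΔ h4, lift_tF hn hΔ h3,
    lift_tF hn hΔ h5, lift_tF hn hΔ h2, triple, triple, mul_inv_eq_one]
  congr 1
  apply congrArg
  apply Subtype.ext
  show ((tG Δ i (cpred i))⁻¹ * tG Δ i j) * ((tG Δ k (cpred k))⁻¹ * tG Δ k j)⁻¹ *
      ((tG Δ k (cpred k))⁻¹ * tG Δ k i)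
    = ((tG Δ i (cpred i))⁻¹ * tG Δ i k) * ((tG Δ j (cpred j))⁻¹ * tG Δ j k)⁻¹ *
      ((tG Δ j (cpred j))⁻¹ * tG Δ j i)
  have t := tri hij hik hjk h1 h2 h3 h4 h5 h6
  calc ((tG Δ i (cpred i))⁻¹ * tG Δ i j) * ((tG Δ k (cpred k))⁻¹ * tG Δ k j)⁻¹ *
      ((tG Δ k (cpred k))⁻¹ * tG Δ k i)
      = (tG Δ i (cpred i))⁻¹ * (tG Δ i j * (tG Δ k j)⁻¹ * tG Δ k i) := by group
    _ = (tG Δ i (cpred i))⁻¹ * (tG Δ i k * (tG Δ j k)⁻¹ * tG Δ j i) := by rw [t]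
    _ = ((tG Δ i (cpred i))⁻¹ * tG Δ i k) * ((tG Δ j (cpred j))⁻¹ * tG Δ j k)⁻¹ *
      ((tG Δ j (cpred j))⁻¹ * tG Δ j i) := by group

/-- The homomorphism `φ : 𝕋_Δ → F_n ∗ 𝕌_Δ`. -/
def phi (hn : 2 ≤ n) (hΔ : IsTriangulation Δ) :
    TriGroup Δ →* Monoid.Coprod (FreeGroup (Fin n)) (UDelta Δ) :=
  PresentedGroup.toGroup (hrel hn hΔ)

/-- The homomorphism `ψ : F_n ∗ 𝕌_Δ → 𝕋_Δ`. -/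
def psi (hn : 2 ≤ n) (hΔ : IsTriangulation Δ) :
    Monoid.Coprod (FreeGroup (Fin n)) (UDelta Δ) →* TriGroup Δ :=
  Monoid.Coprod.lift (FreeGroup.lift (fun i => tG Δ i (cpred i))) (UDelta Δ).subtype

lemma phi_tG (hn : 2 ≤ n) (hΔ : IsTriangulation Δ) {i j : Fin n} (h : (i, j) ∈ Δ) :
    phi hn hΔ (tG Δ i j) =
      Monoid.Coprod.inl (FreeGroup.of i) * Monoid.Coprod.inr (uu hn hΔ i j h) := by
  rw [tG_of h, phi, PresentedGroup.toGroup.of]; rfl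

lemma phi_mem (hn : 2 ≤ n) (hΔ : IsTriangulation Δ) :
    ∀ (g : TriGroup Δ) (hg : g ∈ UDelta Δ),
      phi hn hΔ g = Monoid.Coprod.inr (⟨g, hg⟩ : UDelta Δ) := by
  intro g hg
  induction hg using Subgroup.closure_induction with
  | mem x hx =>
      obtain ⟨i, j, k, hki, hkj, rfl⟩ := hx
      rw [map_mul, map_inv, phi_tG hn hΔ hki, phi_tG hn hΔ hkj, pair]
      apply congrArg
      apply Subtype.ext
      show ((tG Δ k (cpred k))⁻¹ * tG Δ k i)⁻¹ * ((tG Δ k (cpred k))⁻¹ * tG Δ k j)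
        = (tG Δ k i)⁻¹ * tG Δ k j
      group
  | one =>
      rw [map_one]
      have : (⟨(1 : TriGroup Δ), Subgroup.one_mem _⟩ : UDelta Δ) = 1 := rfl
      rw [this, map_one]
  | mul x y hx hy ihx ihy =>
      rw [map_mul, ihx, ihy, ← map_mul]; rfl
  | inv x hx ihx =>
      rw [map_inv, ihx, ← map_inv]; rfl

lemma psi_phi (hn : 2 ≤ n) (hΔ : IsTriangulation Δ) :
    (psi hn hΔ).comp (phi hn hΔ) = MonoidHom.id (TriGroup Δ) := by
  apply PresentedGroup.ext
  rintro ⟨⟨i, j⟩, hij⟩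
  rw [MonoidHom.id_apply, MonoidHom.comp_apply, ← tG_of hij, phi_tG hn hΔ hij]
  rw [map_mul, psi, Monoid.Coprod.lift_apply_inl, Monoid.Coprod.lift_apply_inr,
    FreeGroup.lift_apply_of]
  show tG Δ i (cpred i) * ((tG Δ i (cpred i))⁻¹ * tG Δ i j) = tG Δ i j
  group

lemma phi_psi (hn : 2 ≤ n) (hΔ : IsTriangulation Δ) :
    (phi hn hΔ).comp (psi hn hΔ) =
      MonoidHom.id (Monoid.Coprod (FreeGroup (Fin n)) (UDelta Δ)) := by
  apply Monoid.Coprod.hom_ext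
  · apply FreeGroup.ext_hom
    intro i
    show phi hn hΔ (psi hn hΔ (Monoid.Coprod.inl (FreeGroup.of i))) = Monoid.Coprod.inl (FreeGroup.of i)
    rw [psi, Monoid.Coprod.lift_apply_inl, FreeGroup.lift_apply_of,
      phi_tG hn hΔ (pred_mem hn hΔ i)]
    have h1 : uu hn hΔ i (cpred i) (pred_mem hn hΔ i) = 1 := by
      apply Subtype.ext
      show (tG Δ i (cpred i))⁻¹ * tG Δ i (cpred i) = 1
      group
    rw [h1, map_one, mul_one]
  · apply MonoidHom.ext
    intro u
    show phi hn hΔ (psi hn hΔ (Monoid.Coprod.inr u)) = Monoid.Coprod.inr u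
    rw [psi, Monoid.Coprod.lift_apply_inr]
    exact phi_mem hn hΔ u.1 u.2

end Main

/-- For every triangulation `Δ` of `[n]`, the group `𝕋_Δ` is isomorphic
to the free product `F_n ∗ 𝕌_Δ`, via an isomorphism sending `t_{ij}` to
`c_i * u_{i⁻,j}^i` where `u_{i⁻,j}^i = t_{i,i⁻}⁻¹ t_{ij} ∈ 𝕌_Δ`. -/
theorem triangle_group_free_product (n : ℕ) (hn : 2 ≤ n) (Δ : Set (Fin n × Fin n))
    (hΔ : IsTriangulation Δ) :
    ∃ e : TriGroup Δ ≃* Monoid.Coprod (FreeGroup (Fin n)) (UDelta Δ),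
      ∀ i j : Fin n, (i, j) ∈ Δ →
        ∃ u : UDelta Δ, (u : TriGroup Δ) = (tG Δ i (cpred i))⁻¹ * tG Δ i j ∧
          e (tG Δ i j) = Monoid.Coprod.inl (FreeGroup.of i) * Monoid.Coprod.inr u := by
  refine ⟨MonoidHom.toMulEquiv (phi hn hΔ) (psi hn hΔ) (psi_phi hn hΔ) (phi_psi hn hΔ), ?_⟩
  intro i j hij
  refine ⟨uu hn hΔ i j hij, rfl, ?_⟩
  show phi hn hΔ (tG Δ i j) = _
  exact phi_tG hn hΔ hij

end NCPolygon
end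
end
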